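/- Let G be a finite simple graph whose vertex set is the disjoint union of two nonempty cliques C1 and C2 and the set U of universal vertices of G, with |U| = 1. Then G has a 2-tuple dominating set and γ×2(G) = 3. -/

import Mathlib

open Set

/-- The closed neighborhood `N[v]` of a vertex `v`: `v` together with its neighbors. -/
def closedNbhd {V : Type*} (G : SimpleGraph V) (v : V) : Set V :=
  insert v {w | G.Adj v w}

/-- `D` is a `k`-tuple dominating set of `G`: every vertex has at least `k` members of `D`
in its closed neighborhood. -/
def IsKTupleDomSet {V : Type*} (G : SimpleGraph V) (k : ℕ) (D : Set V) : Prop :=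
  ∀ v : V, k ≤ (closedNbhd G v ∩ D).ncard

/-- `γ×k(G)`: the minimum cardinality of a `k`-tuple dominating set of `G`. -/
noncomputable def gammaTuple {V : Type*} (G : SimpleGraph V) (k : ℕ) : ℕ :=
  sInf {n | ∃ D : Set V, IsKTupleDomSet G k D ∧ D.ncard = n}

/-- A vertex is universal if its closed neighborhood is the whole vertex set. -/
def IsUniversalVertex {V : Type*} (G : SimpleGraph V) (u : V) : Prop :=
  closedNbhd G u = Set.univ

/-- if `V(G)` is the disjoint union of two nonempty cliques and the set `U` of
universal vertices of `G`, with `|U| = 1`, then `G` has a `2`-tuple dominating set and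
`γ×2(G) = 3`. -/
theorem stmt8 {V : Type*} [Fintype V] (G : SimpleGraph V) (C1 C2 U : Set V)
    (hd12 : Disjoint C1 C2) (hd1U : Disjoint C1 U) (hd2U : Disjoint C2 U)
    (hunion : C1 ∪ C2 ∪ U = Set.univ)
    (hne1 : C1.Nonempty) (hne2 : C2.Nonempty)
    (hcl1 : G.IsClique C1) (hcl2 : G.IsClique C2)
    (hU : U = {u : V | IsUniversalVertex G u})
    (hUcard : U.ncard = 1) :
    (∃ D : Set V, IsKTupleDomSet G 2 D) ∧ gammaTuple G 2 = 3 := by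
  obtain ⟨u, hUu⟩ := Set.ncard_eq_one.mp hUcard
  obtain ⟨c1, hc1⟩ := hne1
  obtain ⟨c2, hc2⟩ := hne2
  have huU : u ∈ U := hUu ▸ rfl
  have huniv : closedNbhd G u = Set.univ := by
    have := hU ▸ huU; exact this
  -- u is in every closed neighborhood
  have humem : ∀ v : V, u ∈ closedNbhd G v := by
    intro v
    have hv : v ∈ closedNbhd G u := huniv ▸ Set.mem_univ v
    rcases hv with h | h
    · exact Or.inl h.symm
    · exact Or.inr (G.adj_symm h)
  have huc1 : u ≠ c1 := fun h => Set.disjoint_left.mp hd1U (h ▸ hc1) huU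
  have huc2 : u ≠ c2 := fun h => Set.disjoint_left.mp hd2U (h ▸ hc2) huU
  have hc12 : c1 ≠ c2 := fun h => Set.disjoint_left.mp hd12 hc1 (h ▸ hc2)
  set D : Set V := {u, c1, c2} with hD
  have hdom : IsKTupleDomSet G 2 D := by
    intro v
    have hv : v ∈ C1 ∪ C2 ∪ U := hunion ▸ Set.mem_univ v
    have key : ∃ a b : V, a ≠ b ∧ {a, b} ⊆ closedNbhd G v ∩ D := by
      rcases hv with (h | h) | h
      · refine ⟨u, c1, huc1, Set.insert_subset ⟨humem v, Or.inl rfl⟩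
          (Set.singleton_subset_iff.mpr ⟨?_, Or.inr (Or.inl rfl)⟩)⟩
        rcases eq_or_ne v c1 with rfl | hne
        · exact Or.inl rfl
        · exact Or.inr (hcl1 h hc1 hne)
      · refine ⟨u, c2, huc2, Set.insert_subset ⟨humem v, Or.inl rfl⟩
          (Set.singleton_subset_iff.mpr ⟨?_, Or.inr (Or.inr rfl)⟩)⟩
        rcases eq_or_ne v c2 with rfl | hne
        · exact Or.inl rfl
        · exact Or.inr (hcl2 h hc2 hne)
      · have hvu : v = u := by rw [hUu] at h; exact h
        rw [hvu]
        exact ⟨u, c1, huc1, Set.insert_subset ⟨humem u, Or.inl rfl⟩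
          (Set.singleton_subset_iff.mpr ⟨huniv ▸ Set.mem_univ c1, Or.inr (Or.inl rfl)⟩)⟩
    obtain ⟨a, b, hab, hsub⟩ := key
    calc (2 : ℕ) = ({a, b} : Set V).ncard := (Set.ncard_pair hab).symm
      _ ≤ (closedNbhd G v ∩ D).ncard := Set.ncard_le_ncard hsub (Set.toFinite _)
  have hDcard : D.ncard = 3 := by
    rw [hD, Set.ncard_insert_of_notMem (by simp [huc1, huc2]) (Set.toFinite _),
      Set.ncard_pair hc12]
  have hlb : ∀ n ∈ {n | ∃ D' : Set V, IsKTupleDomSet G 2 D' ∧ D'.ncard = n}, 3 ≤ n := by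
    rintro n ⟨D', hdom', rfl⟩
    by_contra hlt
    push_neg at hlt
    have hD'le : D'.ncard ≤ 2 := by omega
    -- every closed nbhd intersected with D' has ≥ 2 elements, so D'.ncard = 2
    have hge : ∀ v : V, 2 ≤ (closedNbhd G v ∩ D').ncard := hdom'
    have hcard2 : D'.ncard = 2 := by
      have := le_trans (hge c1) (Set.ncard_le_ncard Set.inter_subset_right (Set.toFinite _))
      omega
    -- for each v, the intersection equals D'
    have hsubD : ∀ v : V, D' ⊆ closedNbhd G v := by
      intro v
      have h1 : (closedNbhd G v ∩ D') = D' :=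
        Set.eq_of_subset_of_ncard_le Set.inter_subset_right
          (by rw [hcard2]; exact hge v) (Set.toFinite _)
      exact fun x hx => (h1.symm.subset hx).1
    -- every element of D' is universal
    have hDU : D' ⊆ U := by
      intro a ha
      rw [hU]
      show closedNbhd G a = Set.univ
      apply Set.eq_univ_of_forall
      intro v
      have : a ∈ closedNbhd G v := hsubD v ha
      rcases this with h | h
      · exact Or.inl h.symm
      · exact Or.inr (G.adj_symm h)
    have := Set.ncard_le_ncard hDU (Set.toFinite _)
    omega
  constructor
  · exact ⟨D, hdom⟩
  · have h3mem : 3 ∈ {n | ∃ D' : Set V, IsKTupleDomSet G 2 D' ∧ D'.ncard = n} :=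
      ⟨D, hdom, hDcard⟩
    exact le_antisymm (Nat.sInf_le h3mem) (le_csInf ⟨3, h3mem⟩ hlb)
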